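/- Let Γ = (V, E, s, t, wt) be a finite weighted directed multigraph with weights in a commutative ring R, let k ≥ 1, let ν : E → S_k be a voltage assignment, and let Γ̃_ν be the derived k-fold cover of Γ. Then the arborescence ratio is independent of the choice of root and lift: for all vertices v, w ∈ V and all x, y ∈ {1,…,k}, A_{(v,x)}(Γ̃_ν) · A_w(Γ) = A_{(w,y)}(Γ̃_ν) · A_v(Γ). -/

import Mathlib

open Classical in
noncomputable def arbSum {V E R : Type} [Fintype V] [DecidableEq V] [Fintype E]
    [CommRing R] (s t : E → V) (wt : E → R) (v : V) : R :=
  ∑ T : {w : V // w ≠ v} → E,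
    if (∀ w : {w : V // w ≠ v}, s (T w) = (w : V)) ∧
       (∀ w : V, ∃ n : ℕ,
         (fun u => if h : u = v then v else t (T ⟨u, h⟩))^[n] w = v)
    then ∏ w : {w : V // w ≠ v}, wt (T w) else 0

namespace ArbAux
open Finset Equiv

variable {V E R : Type} [Fintype V] [DecidableEq V] [Fintype E] [CommRing R]

open Classical in
/-- The (out-degree) Laplacian of the digraph. -/
noncomputable def lap (s t : E → V) (wt : E → R) : Matrix V V R := fun u z =>
  (if u = z then ∑ e ∈ univ.filter (fun e => s e = u), wt e else 0)
    - ∑ e ∈ univ.filter (fun e => s e = u ∧ t e = z), wt e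

section MTT

variable (s t : E → V) (wt : E → R) (v : V)

abbrev Wv (v : V) : Type := {w : V // w ≠ v}

open Classical in
/-- the step map of `T`. -/
def step (T : {w : V // w ≠ v} → E) : V → V :=
  fun u => if h : u = v then v else t (T ⟨u, h⟩)

open Classical in
noncomputable def Dset (σ : Perm {w : V // w ≠ v}) (u : {w : V // w ≠ v}) : Finset E :=
  univ.filter (fun e => s e = ↑u ∧ (if σ u = u then t e ≠ ↑u else t e = ↑(σ u)))

def compat (σ : Perm {w : V // w ≠ v}) (F : {w : V // w ≠ v} → E) : Prop :=
  ∀ u, F u ∈ Dset s t v σ u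

noncomputable def wgt (σ : Perm {w : V // w ≠ v}) : ℤ :=
  ((Perm.sign σ : ℤˣ) : ℤ) * ∏ u, (if σ u = u then (1 : ℤ) else -1)


lemma periodic_avoid {f : V → V} {v p : V} (hfv : f v = v) (hp : p ≠ v) {k : ℕ} (hk : 0 < k)
    (hfix : f^[k] p = p) : ∀ n, f^[n] p ≠ v := by
  intro n hn
  rcases Nat.eq_zero_or_pos n with h0 | hpos
  · subst h0; exact hp hn
  · have h1 : f^[k * n] p = p := by
      rw [Function.iterate_mul]; exact Function.iterate_fixed hfix n
    have h2 : n ≤ k * n := Nat.le_mul_of_pos_left n hk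
    have h3 : f^[k * n] p = v := by
      rw [← Nat.sub_add_cancel h2, Function.iterate_add_apply, hn]
      exact Function.iterate_fixed hfv _
    exact hp (h1.symm.trans h3)

open Classical in
theorem key (F : {w : V // w ≠ v} → E) :
    ∑ σ : Perm {w : V // w ≠ v}, (if compat s t v σ F then ((wgt v σ : ℤ) : R) else 0)
      = if (∀ u, s (F u) = ↑u) ∧ (∀ z : V, ∃ n : ℕ, (step t v F)^[n] z = v)
        then 1 else 0 := by
  classical
  set f : V → V := step t v F with hf
  have hfv : f v = v := dif_pos rfl
  have hfu : ∀ u : (Wv v), f ↑u = t (F u) := fun u => dif_neg u.2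
  by_cases hs : ∀ u : (Wv v), s (F u) = ↑u
  swap
  · rw [if_neg (fun hcc => hs hcc.1)]
    apply Finset.sum_eq_zero; intro σ _
    rw [if_neg]; intro hc
    apply hs; intro u
    have h1 := hc u; rw [Dset, Finset.mem_filter] at h1; exact h1.2.1
  by_cases ht : ∀ u : (Wv v), t (F u) ≠ ↑u
  swap
  · push_neg at ht; obtain ⟨u0, htu⟩ := ht
    have hloop : ∀ n, f^[n] (↑u0) = ↑u0 := Function.iterate_fixed ((hfu u0).trans htu)
    rw [if_neg ?hbad]
    case hbad =>
      rintro ⟨-, hit⟩; obtain ⟨n, hn⟩ := hit ↑u0; exact u0.2 ((hloop n).symm.trans hn)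
    apply Finset.sum_eq_zero; intro σ _
    rw [if_neg]; intro hc
    have h1 := hc u0; rw [Dset, Finset.mem_filter] at h1
    obtain ⟨-, -, hcond⟩ := h1
    by_cases h : σ u0 = u0
    · rw [if_pos h] at hcond; exact hcond htu
    · rw [if_neg h] at hcond
      exact h (Subtype.coe_injective (hcond.symm.trans htu))
  have hcompat_t : ∀ (σ : Perm (Wv v)), compat s t v σ F → ∀ u : (Wv v), σ u ≠ u → t (F u) = ↑(σ u) := by
    intro σ hcomp u hu
    have h1 := hcomp u; rw [Dset, Finset.mem_filter] at h1
    obtain ⟨-, -, hcond⟩ := h1; rwa [if_neg hu] at hcond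
  have hiter_supp : ∀ (σ : Perm (Wv v)), compat s t v σ F → ∀ u : (Wv v), σ u ≠ u →
      ∀ n : ℕ, ∃ w : (Wv v), σ w ≠ w ∧ f^[n] ↑u = ↑w := by
    intro σ hcomp u hu n
    induction n with
    | zero => exact ⟨u, hu, rfl⟩
    | succ n ih =>
      obtain ⟨w, hw, hwe⟩ := ih
      refine ⟨σ w, fun hh => hw (σ.injective hh), ?_⟩
      rw [Function.iterate_succ_apply', hwe, hfu w, hcompat_t σ hcomp w hw]
  by_cases hgood : ∀ z : V, ∃ n : ℕ, f^[n] z = v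
  · rw [if_pos ⟨hs, hgood⟩]
    have hcompat1 : compat s t v 1 F := by
      intro u; rw [Dset, Finset.mem_filter]
      refine ⟨Finset.mem_univ _, hs u, ?_⟩
      rw [if_pos (Equiv.Perm.one_apply u)]
      exact ht u
    rw [Finset.sum_eq_single (1 : Perm (Wv v))]
    · rw [if_pos hcompat1, wgt]
      simp [Equiv.Perm.one_apply]
    · intro σ _ hσ
      rw [if_neg]; intro hc
      apply hσ
      ext u
      by_contra hu
      have hu' : σ u ≠ u := fun hh => hu (by rw [hh]; rfl)
      obtain ⟨n, hn⟩ := hgood ↑u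
      obtain ⟨w, -, hwe⟩ := hiter_supp σ hc u hu' n
      exact w.2 (hwe.symm.trans hn)
    · intro h; exact absurd (Finset.mem_univ _) h
  · push_neg at hgood
    obtain ⟨z, hz⟩ := hgood
    rw [if_neg (fun hcc => by obtain ⟨n, hn⟩ := hcc.2 z; exact hz n hn)]
    -- find a periodic point
    have hper : ∃ p : V, p ≠ v ∧ ∃ k : ℕ, 0 < k ∧ f^[k] p = p := by
      have hcard : Fintype.card V < Fintype.card (Fin (Fintype.card V + 1)) := by simp
      obtain ⟨i, j, hij, hEq⟩ :=
        Fintype.exists_ne_map_eq_of_card_lt (fun i : Fin (Fintype.card V + 1) => f^[(i : ℕ)] z) hcard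
      have hgen : ∀ (a b : ℕ), a < b → f^[a] z = f^[b] z →
          ∃ p : V, p ≠ v ∧ ∃ k : ℕ, 0 < k ∧ f^[k] p = p := by
        intro a b hab he
        refine ⟨f^[a] z, hz a, b - a, by omega, ?_⟩
        rw [← Function.iterate_add_apply]
        have hba : b - a + a = b := by omega
        rw [hba, ← he]
      rcases lt_trichotomy (i : ℕ) (j : ℕ) with hlt | heq | hgt
      · exact hgen _ _ hlt hEq
      · exact absurd (Fin.ext heq) hij
      · exact hgen _ _ hgt hEq.symm
    obtain ⟨p, hpv, k, hk, hfix⟩ := hper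
    have havoid : ∀ n, f^[n] p ≠ v := periodic_avoid hfv hpv hk hfix
    set O : Finset V := (Finset.range k).image (fun i => f^[i] p) with hO
    have hOmem : ∀ i : ℕ, f^[i] p ∈ O := by
      intro i
      have h1 : f^[i] p = f^[i % k] p := by
        conv_lhs => rw [← Nat.mod_add_div i k]
        rw [Function.iterate_add_apply]
        congr 1
        rw [Function.iterate_mul]
        exact Function.iterate_fixed hfix _
      rw [h1]; exact Finset.mem_image_of_mem _ (Finset.mem_range.2 (Nat.mod_lt _ hk))
    have hOv : ∀ y ∈ O, y ≠ v := by
      intro y hy; obtain ⟨i, -, rfl⟩ := Finset.mem_image.1 hy; exact havoid i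
    have hOiter : ∀ y ∈ O, ∀ j : ℕ, f^[j] y ∈ O := by
      intro y hy j; obtain ⟨i, -, rfl⟩ := Finset.mem_image.1 hy
      rw [← Function.iterate_add_apply]; exact hOmem _
    have hOf : ∀ y ∈ O, f y ∈ O := by
      intro y hy; have h1 := hOiter y hy 1; simpa using h1
    have hOfix : ∀ y ∈ O, f^[k] y = y := by
      intro y hy; obtain ⟨i, -, rfl⟩ := Finset.mem_image.1 hy
      rw [← Function.iterate_add_apply, Nat.add_comm, Function.iterate_add_apply, hfix]
    have hks : k - 1 + 1 = k := Nat.succ_pred_eq_of_pos hk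
    have hret : ∀ y ∈ O, f^[k-1] (f y) = y := by
      intro y hy
      have h1 : f^[k-1] (f y) = f^[k] y := by
        conv_rhs => rw [← hks]
        exact (Function.iterate_succ_apply f (k-1) y).symm
      rw [h1]; exact hOfix y hy
    have hfy : ∀ y ∈ O, f y ≠ y := by
      intro y hy heq
      exact ht ⟨y, hOv y hy⟩ ((hfu ⟨y, hOv y hy⟩).symm.trans heq)
    -- the cyclic permutation on O
    have hmemf : ∀ (u : (Wv v)), (↑u : V) ∈ O → (f ↑u ≠ v) := fun u h => hOv _ (hOf _ h)
    have hmemr : ∀ (u : (Wv v)), (↑u : V) ∈ O → (f^[k-1] ↑u ≠ v) := fun u h => hOv _ (hOiter _ h _)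
    set cf : (Wv v) → (Wv v) := fun u => if h : (↑u : V) ∈ O then ⟨f ↑u, hmemf u h⟩ else u with hcf
    set cg : (Wv v) → (Wv v) := fun u => if h : (↑u : V) ∈ O then ⟨f^[k-1] ↑u, hmemr u h⟩ else u with hcg
    have hlinv : Function.LeftInverse cg cf := by
      intro u
      by_cases h : (↑u : V) ∈ O
      · have h2 : ((⟨f ↑u, hmemf u h⟩ : (Wv v)) : V) ∈ O := hOf _ h
        simp only [hcf, hcg, dif_pos h, dif_pos h2]
        exact Subtype.ext (hret _ h)
      · simp only [hcf, hcg, dif_neg h]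
    have hrinv : Function.RightInverse cg cf := by
      intro u
      by_cases h : (↑u : V) ∈ O
      · have h2 : ((⟨f^[k-1] ↑u, hmemr u h⟩ : (Wv v)) : V) ∈ O := hOiter _ h _
        simp only [hcg, hcf, dif_pos h, dif_pos h2]
        refine Subtype.ext ?_
        show f (f^[k-1] ↑u) = ↑u
        have h3 : f^[k-1+1] ↑u = ↑u := by rw [hks]; exact hOfix _ h
        exact (Function.iterate_succ_apply' f (k-1) ↑u).symm.trans h3
      · simp only [hcf, hcg, dif_neg h]
    set c : Perm (Wv v) := ⟨cf, cg, hlinv, hrinv⟩ with hc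
    have hcapp : ∀ u : (Wv v), (↑u : V) ∈ O → (↑(c u) : V) = f ↑u := by
      intro u h; show (↑(cf u) : V) = f ↑u; rw [hcf]; simp only [dif_pos h]
    have hcoff : ∀ u : (Wv v), (↑u : V) ∉ O → c u = u := by
      intro u h; show cf u = u; rw [hcf]; simp only [dif_neg h]
    have hcmem : ∀ u : (Wv v), (↑u : V) ∈ O → (↑(c u) : V) ∈ O := by
      intro u h; rw [hcapp u h]; exact hOf _ h
    have hcne : ∀ u : (Wv v), (↑u : V) ∈ O → c u ≠ u := by
      intro u h heq
      apply hfy ↑u h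
      rw [← hcapp u h, heq]
    have hcoffinv : ∀ u : (Wv v), (↑u : V) ∉ O → c⁻¹ u = u := by
      intro u h
      apply c.injective
      rw [show c (c⁻¹ u) = u from c.apply_symm_apply u]; exact (hcoff u h).symm
    have hcinv : ∀ u : (Wv v), (↑u : V) ∈ O → ((↑(c⁻¹ u) : V) ∈ O ∧ c (c⁻¹ u) = u) := by
      intro u h
      have hw : c (c⁻¹ u) = u := c.apply_symm_apply u
      by_cases hwO : (↑(c⁻¹ u) : V) ∈ O
      · exact ⟨hwO, hw⟩
      · exfalso
        have h1 := hcoff _ hwO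
        rw [hw] at h1
        exact hwO (h1 ▸ h)
    -- c is a cycle with support O
    have hpmem : p ∈ O := by have h1 := hOmem 0; simpa using h1
    set p' : (Wv v) := ⟨p, hpv⟩ with hp'
    have hp'mem : (↑p' : V) ∈ O := hpmem
    have hcpow : ∀ i : ℕ, ((c ^ i) p' : (Wv v)) = ⟨f^[i] p, havoid i⟩ := by
      intro i; induction i with
      | zero => simp [hp']
      | succ n ih =>
        rw [pow_succ', Equiv.Perm.mul_apply, ih]
        have hmem : ((⟨f^[n] p, havoid n⟩ : (Wv v)) : V) ∈ O := hOmem n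
        refine Subtype.ext ?_
        rw [hcapp _ hmem]
        exact (Function.iterate_succ_apply' f n p).symm
    have hcIsCycle : c.IsCycle := by
      refine ⟨p', hcne p' hp'mem, ?_⟩
      intro y hy
      have hyO : (↑y : V) ∈ O := by
        by_contra hyO; exact hy (hcoff y hyO)
      obtain ⟨i, -, hiy⟩ := Finset.mem_image.1 hyO
      refine ⟨(i : ℤ), ?_⟩
      rw [zpow_natCast, hcpow i]
      exact Subtype.ext hiy
    have hsupc : c.support = univ.filter (fun u : (Wv v) => (↑u : V) ∈ O) := by
      ext u
      simp only [Equiv.Perm.mem_support, Finset.mem_filter, Finset.mem_univ, true_and]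
      constructor
      · intro h; by_contra hOu; exact h (hcoff u hOu)
      · intro h; exact hcne u h
    set m := (univ.filter (fun u : (Wv v) => (↑u : V) ∈ O)).card with hm
    have hsign : Equiv.Perm.sign c = -(-1) ^ m := by
      rw [hcIsCycle.sign, hsupc]
    -- dichotomy
    have hdich : ∀ (σ : Perm (Wv v)), compat s t v σ F → (¬ ∀ u : (Wv v), (↑u : V) ∈ O → σ u = u) →
        ∀ u : (Wv v), (↑u : V) ∈ O → σ u = c u := by
      intro σ hcomp hb u hu
      push_neg at hb; obtain ⟨u₁, hu₁O, hu₁⟩ := hb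
      obtain ⟨i, -, hi⟩ := Finset.mem_image.1 hu
      obtain ⟨i₁, hi₁lt, hi₁⟩ := Finset.mem_image.1 hu₁O
      rw [Finset.mem_range] at hi₁lt
      have hreach : f^[i + (k - i₁)] ↑u₁ = ↑u := by
        rw [← hi₁, ← Function.iterate_add_apply]
        have hq : i + (k - i₁) + i₁ = i + k := by omega
        rw [hq, Function.iterate_add_apply, hfix, hi]
      obtain ⟨w, hww, hwe⟩ := hiter_supp σ hcomp u₁ hu₁ (i + (k - i₁))
      have huw : u = w := Subtype.ext (hreach.symm.trans hwe)
      subst huw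
      have h1 : t (F u) = ↑(σ u) := hcompat_t σ hcomp u hww
      refine Subtype.ext ?_
      rw [← h1, hcapp u hu, hfu u]

    -- the sign-reversing involution
    set Bc : Perm (Wv v) → Prop := fun σ => ∀ u : Wv v, (↑u : V) ∈ O → σ u = u with hBc
    have hoffc : ∀ (σ : Perm (Wv v)) (u : Wv v), (↑u : V) ∉ O → (σ * c) u = σ u := by
      intro σ u hu; rw [Equiv.Perm.mul_apply, hcoff u hu]
    have hoffci : ∀ (σ : Perm (Wv v)) (u : Wv v), (↑u : V) ∉ O → (σ * c⁻¹) u = σ u := by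
      intro σ u hu; rw [Equiv.Perm.mul_apply, hcoffinv u hu]
    have hCc : ∀ σ, compat s t v σ F → Bc σ → compat s t v (σ * c) F := by
      intro σ hcomp hb u
      rw [Dset, Finset.mem_filter]
      refine ⟨Finset.mem_univ _, hs u, ?_⟩
      by_cases hu : (↑u : V) ∈ O
      · have happ : (σ * c) u = c u := by rw [Equiv.Perm.mul_apply, hb _ (hcmem u hu)]
        rw [if_neg (fun hh => hcne u hu (happ ▸ hh))]
        rw [happ, hcapp u hu, hfu u]
      · have happ : (σ * c) u = σ u := hoffc σ u hu
        have hcnd := hcomp u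
        rw [Dset, Finset.mem_filter] at hcnd
        rw [happ]
        exact hcnd.2.2
    have hCci : ∀ σ, compat s t v σ F → ¬ Bc σ →
        ∀ u : Wv v, (↑u : V) ∈ O → (σ * c⁻¹) u = u := by
      intro σ hcomp hb u hu
      rw [Equiv.Perm.mul_apply, hdich σ hcomp hb _ (hcinv u hu).1, (hcinv u hu).2]
    have hCci' : ∀ σ, compat s t v σ F → ¬ Bc σ → compat s t v (σ * c⁻¹) F := by
      intro σ hcomp hb u
      rw [Dset, Finset.mem_filter]
      refine ⟨Finset.mem_univ _, hs u, ?_⟩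
      by_cases hu : (↑u : V) ∈ O
      · rw [if_pos (hCci σ hcomp hb u hu)]; exact ht u
      · have happ : (σ * c⁻¹) u = σ u := hoffci σ u hu
        have hcnd := hcomp u
        rw [Dset, Finset.mem_filter] at hcnd
        rw [happ]
        exact hcnd.2.2
    have hwgtflip : ∀ σ, compat s t v σ F →
        wgt v (if Bc σ then σ * c else σ * c⁻¹) = - wgt v σ := by
      intro σ hcomp
      have hsplitw : ∀ τ : Perm (Wv v), wgt v τ = ((Equiv.Perm.sign τ : ℤˣ) : ℤ) *
          ((∏ u ∈ univ.filter (fun u : Wv v => (↑u : V) ∈ O), (if τ u = u then (1:ℤ) else -1)) *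
           (∏ u ∈ univ.filter (fun u : Wv v => ¬ (↑u : V) ∈ O), (if τ u = u then (1:ℤ) else -1))) := by
        intro τ; rw [wgt, Finset.prod_filter_mul_prod_filter_not]
      by_cases hb : Bc σ
      · rw [if_pos hb, hsplitw, hsplitw]
        have hofeq : (∏ u ∈ univ.filter (fun u : Wv v => ¬ (↑u : V) ∈ O),
              (if (σ * c) u = u then (1:ℤ) else -1))
            = ∏ u ∈ univ.filter (fun u : Wv v => ¬ (↑u : V) ∈ O), (if σ u = u then (1:ℤ) else -1) := by
          apply Finset.prod_congr rfl
          intro u hu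
          rw [Finset.mem_filter] at hu
          rw [hoffc σ u hu.2]
        have hone : (∏ u ∈ univ.filter (fun u : Wv v => (↑u : V) ∈ O),
            (if σ u = u then (1:ℤ) else -1)) = 1 := by
          apply Finset.prod_eq_one
          intro u hu
          rw [Finset.mem_filter] at hu
          rw [if_pos (hb u hu.2)]
        have hmone : (∏ u ∈ univ.filter (fun u : Wv v => (↑u : V) ∈ O),
            (if (σ * c) u = u then (1:ℤ) else -1)) = (-1)^m := by
          calc (∏ u ∈ univ.filter (fun u : Wv v => (↑u : V) ∈ O),
              (if (σ * c) u = u then (1:ℤ) else -1))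
              = ∏ _u ∈ univ.filter (fun u : Wv v => (↑u : V) ∈ O), (-1:ℤ) := by
                apply Finset.prod_congr rfl
                intro u hu
                rw [Finset.mem_filter] at hu
                have happ : (σ * c) u = c u := by
                  rw [Equiv.Perm.mul_apply, hb _ (hcmem u hu.2)]
                rw [if_neg (fun hh => hcne u hu.2 (happ ▸ hh))]
            _ = (-1)^m := by rw [Finset.prod_const, hm]
        rw [hofeq, hone, hmone]
        have hsgn : ((Equiv.Perm.sign (σ * c) : ℤˣ) : ℤ)
            = ((Equiv.Perm.sign σ : ℤˣ) : ℤ) * (-(-1)^m) := by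
          rw [map_mul, hsign]; push_cast; ring
        rw [hsgn]
        have h2 : ((-1:ℤ)^m) * ((-1:ℤ)^m) = 1 := by
          rw [← pow_add]; exact Even.neg_one_pow ⟨m, rfl⟩
        linear_combination (-(((Equiv.Perm.sign σ : ℤˣ) : ℤ) *
          (∏ u ∈ univ.filter (fun u : Wv v => ¬ (↑u : V) ∈ O), (if σ u = u then (1:ℤ) else -1)))) * h2
      · rw [if_neg hb, hsplitw, hsplitw]
        have hσc := hdich σ hcomp hb
        have hofeq : (∏ u ∈ univ.filter (fun u : Wv v => ¬ (↑u : V) ∈ O),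
              (if (σ * c⁻¹) u = u then (1:ℤ) else -1))
            = ∏ u ∈ univ.filter (fun u : Wv v => ¬ (↑u : V) ∈ O), (if σ u = u then (1:ℤ) else -1) := by
          apply Finset.prod_congr rfl
          intro u hu
          rw [Finset.mem_filter] at hu
          rw [hoffci σ u hu.2]
        have hone : (∏ u ∈ univ.filter (fun u : Wv v => (↑u : V) ∈ O),
            (if (σ * c⁻¹) u = u then (1:ℤ) else -1)) = 1 := by
          apply Finset.prod_eq_one
          intro u hu
          rw [Finset.mem_filter] at hu
          rw [if_pos (hCci σ hcomp hb u hu.2)]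
        have hmone : (∏ u ∈ univ.filter (fun u : Wv v => (↑u : V) ∈ O),
            (if σ u = u then (1:ℤ) else -1)) = (-1)^m := by
          calc (∏ u ∈ univ.filter (fun u : Wv v => (↑u : V) ∈ O),
              (if σ u = u then (1:ℤ) else -1))
              = ∏ _u ∈ univ.filter (fun u : Wv v => (↑u : V) ∈ O), (-1:ℤ) := by
                apply Finset.prod_congr rfl
                intro u hu
                rw [Finset.mem_filter] at hu
                have happ : σ u = c u := hσc u hu.2
                rw [if_neg (fun hh => hcne u hu.2 (happ ▸ hh))]
            _ = (-1)^m := by rw [Finset.prod_const, hm]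
        rw [hofeq, hone, hmone]
        have hsgn : ((Equiv.Perm.sign (σ * c⁻¹) : ℤˣ) : ℤ)
            = ((Equiv.Perm.sign σ : ℤˣ) : ℤ) * (-(-1)^m) := by
          rw [map_mul, map_inv, hsign]
          have hinv2 : (-(-1 : ℤˣ)^m)⁻¹ = (-(-1 : ℤˣ)^m) := by
            rcases Int.units_eq_one_or ((-1:ℤˣ)^m) with h | h <;> rw [h] <;> decide
          rw [hinv2]; push_cast; ring
        rw [hsgn]
        ring
    rw [← Finset.sum_filter]
    refine Finset.sum_involution (fun σ _ => if Bc σ then σ * c else σ * c⁻¹) ?_ ?_ ?_ ?_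
    · intro σ ha
      rw [Finset.mem_filter] at ha
      beta_reduce
      rw [hwgtflip σ ha.2]
      push_cast
      ring
    · intro σ ha _
      beta_reduce
      by_cases hb : Bc σ
      · rw [if_pos hb]
        intro hh
        have h1 : c = 1 := mul_eq_left.1 hh
        exact hcne p' hp'mem (by rw [h1]; rfl)
      · rw [if_neg hb]
        intro hh
        have h1 : c⁻¹ = 1 := mul_eq_left.1 hh
        have h2 : c = 1 := by rwa [inv_eq_one] at h1
        exact hcne p' hp'mem (by rw [h2]; rfl)
    · intro σ ha
      rw [Finset.mem_filter] at ha
      rw [Finset.mem_filter]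
      refine ⟨Finset.mem_univ _, ?_⟩
      beta_reduce
      by_cases hb : Bc σ
      · rw [if_pos hb]; exact hCc σ ha.2 hb
      · rw [if_neg hb]; exact hCci' σ ha.2 hb
    · intro σ ha
      rw [Finset.mem_filter] at ha
      beta_reduce
      by_cases hb : Bc σ
      · simp only [if_pos hb]
        have hnb : ¬ Bc (σ * c) := by
          intro hbb
          have h1 := hbb p' hp'mem
          rw [Equiv.Perm.mul_apply, hb _ (hcmem p' hp'mem)] at h1
          exact hcne p' hp'mem h1
        rw [if_neg hnb, mul_inv_cancel_right]
      · simp only [if_neg hb]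
        have hbb : Bc (σ * c⁻¹) := fun u hu => hCci σ ha.2 hb u hu
        rw [if_pos hbb, inv_mul_cancel_right]

theorem det_lap_minor :
    (((lap s t wt).submatrix (Subtype.val : {w : V // w ≠ v} → V) Subtype.val)).det
      = arbSum s t wt v := by
  classical
  set W := {w : V // w ≠ v}
  set M : Matrix W W R := (lap s t wt).submatrix Subtype.val Subtype.val with hM
  have entry : ∀ (σ : Perm W) (u : W),
      M u (σ u) = ((if σ u = u then (1 : ℤ) else -1 : ℤ) : R) * ∑ e ∈ Dset s t v σ u, wt e := by
    intro σ u
    by_cases h : σ u = u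
    · rw [if_pos h]
      have : M u (σ u) = (∑ e ∈ univ.filter (fun e => s e = ↑u), wt e)
          - ∑ e ∈ univ.filter (fun e => s e = ↑u ∧ t e = ↑u), wt e := by
        simp [hM, lap, Matrix.submatrix_apply, h]
      rw [this]
      have hsplit := Finset.sum_filter_add_sum_filter_not (univ.filter (fun e => s e = ↑u))
        (fun e => t e = ↑u) wt
      rw [Finset.filter_filter, Finset.filter_filter] at hsplit
      rw [Dset]
      simp only [if_pos h]
      push_cast
      rw [one_mul]
      have : (univ.filter fun e => s e = ↑u ∧ t e ≠ ↑u)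
          = (univ.filter fun e => s e = ↑u ∧ ¬ t e = ↑u) := by
        apply Finset.filter_congr; intro e _; rfl
      rw [this, ← hsplit]; ring
    · rw [if_neg h]
      have hne : (u : V) ≠ ↑(σ u) := by
        intro hh; exact h (Subtype.coe_injective hh.symm)
      have : M u (σ u) = 0 - ∑ e ∈ univ.filter (fun e => s e = ↑u ∧ t e = ↑(σ u)), wt e := by
        simp [hM, lap, Matrix.submatrix_apply, if_neg hne]
      rw [this, Dset]
      simp only [if_neg h]
      push_cast
      ring
  rw [← Matrix.det_transpose, Matrix.det_apply']
  have hprod : ∀ σ : Perm W, (∏ i, M.transpose (σ i) i)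
      = ((∏ u, (if σ u = u then (1:ℤ) else -1) : ℤ) : R)
        * ∑ Fk ∈ Fintype.piFinset (Dset s t v σ), ∏ u, wt (Fk u) := by
    intro σ
    simp only [Matrix.transpose_apply]
    rw [Finset.prod_congr rfl (fun i _ => entry σ i), Finset.prod_mul_distrib,
      ← Int.cast_prod, Finset.prod_univ_sum]
  have habs : ∀ σ : Perm W, (((Perm.sign σ : ℤˣ) : ℤ) : R) * (∏ i, M.transpose (σ i) i)
      = ∑ Fk : W → E, (if compat s t v σ Fk then ((wgt v σ : ℤ) : R) * ∏ u, wt (Fk u) else 0) := by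
    intro σ
    rw [hprod σ, ← mul_assoc, ← Int.cast_mul, ← wgt]
    rw [Finset.mul_sum]
    rw [← Finset.sum_filter]
    apply Finset.sum_congr _ (fun _ _ => rfl)
    ext Fk
    simp [Fintype.mem_piFinset, compat]
  calc (∑ σ : Perm W, (((Perm.sign σ : ℤˣ) : ℤ) : R) * ∏ i, M.transpose (σ i) i)
      = ∑ σ : Perm W, ∑ Fk : W → E,
          (if compat s t v σ Fk then ((wgt v σ : ℤ) : R) * ∏ u, wt (Fk u) else 0) :=
        Finset.sum_congr rfl (fun σ _ => habs σ)
    _ = ∑ Fk : W → E, ∑ σ : Perm W,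
          (if compat s t v σ Fk then ((wgt v σ : ℤ) : R) * ∏ u, wt (Fk u) else 0) :=
        Finset.sum_comm
    _ = ∑ Fk : W → E,
          (if (∀ u, s (Fk u) = ↑u) ∧ (∀ z : V, ∃ n : ℕ, (step t v Fk)^[n] z = v)
            then (1:R) else 0) * ∏ u, wt (Fk u) := by
        apply Finset.sum_congr rfl; intro Fk _
        rw [← key s t v Fk, Finset.sum_mul]
        apply Finset.sum_congr rfl; intro σ _
        rw [ite_mul, zero_mul]
    _ = arbSum s t wt v := by
        rw [arbSum]
        apply Finset.sum_congr rfl; intro Fk _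
        by_cases h : (∀ u, s (Fk u) = ↑u) ∧ (∀ z : V, ∃ n : ℕ, (step t v Fk)^[n] z = v)
        · rw [if_pos h, one_mul, if_pos]
          exact ⟨h.1, fun z => h.2 z⟩
        · rw [if_neg h, zero_mul, if_neg]
          intro hc
          exact h ⟨hc.1, fun z => hc.2 z⟩

end MTT

section LinAlg

theorem adjugate_diag {n : Type} [Fintype n] [DecidableEq n] (M : Matrix n n R) (r : n) :
    M.adjugate r r = (M.submatrix (Subtype.val : {i : n // i ≠ r} → n) Subtype.val).det := by
  classical
  rw [Matrix.adjugate_apply, ← Matrix.det_submatrix_equiv_self (Equiv.sumCompl (· = r))]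
  have hb : (M.updateRow r (Pi.single r 1)).submatrix (Equiv.sumCompl (· = r))
        (Equiv.sumCompl (· = r))
      = Matrix.fromBlocks 1 0
          (Matrix.of fun (i : {i : n // ¬ i = r}) (j : {i : n // i = r}) => M ↑i ↑j)
          (M.submatrix Subtype.val Subtype.val) := by
    ext i j
    rcases i with i | i <;> rcases j with j | j
    · have hij : i = j := Subtype.ext (by rw [i.2, j.2])
      subst hij
      simp [Matrix.submatrix_apply, Equiv.sumCompl_apply_inl, i.2, Matrix.one_apply]
    · simp only [Matrix.submatrix_apply, Equiv.sumCompl_apply_inl, Equiv.sumCompl_apply_inr,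
        Matrix.fromBlocks_apply₁₂, Matrix.zero_apply]
      rw [i.2, Matrix.updateRow_self]
      exact Pi.single_eq_of_ne j.2 1
    · simp only [Matrix.submatrix_apply, Equiv.sumCompl_apply_inl, Equiv.sumCompl_apply_inr,
        Matrix.fromBlocks_apply₂₁, Matrix.of_apply]
      rw [Matrix.updateRow_ne i.2]
    · simp only [Matrix.submatrix_apply, Equiv.sumCompl_apply_inr,
        Matrix.fromBlocks_apply₂₂, Matrix.of_apply]
      rw [Matrix.updateRow_ne i.2]
  rw [hb, Matrix.det_fromBlocks_zero₁₂, Matrix.det_one, one_mul]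

variable {K : Type} [Field K]

theorem vec_eq_zero_of_vecMul {n : Type} [Fintype n] [DecidableEq n] (M : Matrix n n K) (r : n)
    (hdet : (M.submatrix (Subtype.val : {i : n // i ≠ r} → n) Subtype.val).det ≠ 0)
    (b : n → K) (hb : Matrix.vecMul b M = 0) (hbr : b r = 0) : b = 0 := by
  classical
  set M' := M.submatrix (Subtype.val : {i : n // i ≠ r} → n) Subtype.val with hM'
  have hall : ∀ j : n, ∑ i : n, b i * M i j = 0 := by
    intro j
    have h0 := congrFun hb j
    simpa [Matrix.vecMul, dotProduct] using h0
  have hker : Matrix.vecMul (fun i : {i : n // i ≠ r} => b ↑i) M' = 0 := by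
    funext j
    have h1 : ∑ i : n, b i * M i ↑j = 0 := hall ↑j
    have h2 : b r * M r ↑j + ∑ i ∈ Finset.univ.erase r, b i * M i ↑j
        = ∑ i : n, b i * M i ↑j :=
      Finset.add_sum_erase Finset.univ (fun i => b i * M i ↑j) (Finset.mem_univ r)
    have h3 : ∑ i ∈ Finset.univ.erase r, b i * M i ↑j
        = ∑ i : {i : n // i ≠ r}, b ↑i * M ↑i ↑j := by
      apply Finset.sum_subtype
      intro x; simp [Finset.mem_erase]
    rw [hbr, zero_mul, zero_add, h3] at h2
    have : Matrix.vecMul (fun i : {i : n // i ≠ r} => b ↑i) M' j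
        = ∑ i : {i : n // i ≠ r}, b ↑i * M ↑i ↑j := by
      simp [Matrix.vecMul, dotProduct, hM', Matrix.submatrix_apply]
    rw [this, h2, h1]
    rfl
  have hb' : (fun i : {i : n // i ≠ r} => b ↑i) = 0 := by
    have h1 := congrArg (fun w => Matrix.vecMul w M'⁻¹) hker
    simpa [Matrix.vecMul_vecMul, Matrix.mul_nonsing_inv M' hdet.isUnit,
      Matrix.vecMul_one, Matrix.zero_vecMul] using h1
  funext i
  by_cases hir : i = r
  · rw [hir, hbr]; rfl
  · exact congrFun hb' ⟨i, hir⟩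

theorem vec_eq_zero_of_mulVec {n : Type} [Fintype n] [DecidableEq n] (M : Matrix n n K) (r : n)
    (hdet : (M.submatrix (Subtype.val : {i : n // i ≠ r} → n) Subtype.val).det ≠ 0)
    (b : n → K) (hb : Matrix.mulVec M b = 0) (hbr : b r = 0) : b = 0 := by
  classical
  set M' := M.submatrix (Subtype.val : {i : n // i ≠ r} → n) Subtype.val with hM'
  have hall : ∀ i : n, ∑ j : n, M i j * b j = 0 := by
    intro i
    have h0 := congrFun hb i
    simpa [Matrix.mulVec, dotProduct] using h0
  have hker : Matrix.mulVec M' (fun j : {i : n // i ≠ r} => b ↑j) = 0 := by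
    funext i
    have h1 : ∑ j : n, M ↑i j * b j = 0 := hall ↑i
    have h2 : M ↑i r * b r + ∑ j ∈ Finset.univ.erase r, M ↑i j * b j
        = ∑ j : n, M ↑i j * b j :=
      Finset.add_sum_erase Finset.univ (fun j => M ↑i j * b j) (Finset.mem_univ r)
    have h3 : ∑ j ∈ Finset.univ.erase r, M ↑i j * b j
        = ∑ j : {i : n // i ≠ r}, M ↑i ↑j * b ↑j := by
      apply Finset.sum_subtype
      intro x; simp [Finset.mem_erase]
    rw [hbr, mul_zero, zero_add, h3] at h2
    have : Matrix.mulVec M' (fun j : {i : n // i ≠ r} => b ↑j) i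
        = ∑ j : {i : n // i ≠ r}, M ↑i ↑j * b ↑j := by
      simp [Matrix.mulVec, dotProduct, hM', Matrix.submatrix_apply]
    rw [this, h2, h1]
    rfl
  have hb' : (fun j : {i : n // i ≠ r} => b ↑j) = 0 := by
    have h1 := congrArg (fun w => Matrix.mulVec M'⁻¹ w) hker
    simpa [Matrix.mulVec_mulVec, Matrix.nonsing_inv_mul M' hdet.isUnit,
      Matrix.one_mulVec, Matrix.mulVec_zero] using h1
  funext i
  by_cases hir : i = r
  · rw [hir, hbr]; rfl
  · exact congrFun hb' ⟨i, hir⟩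

end LinAlg

section Lap

open Classical in
theorem lap_row_sum (s t : E → V) (wt : E → R) (u : V) :
    ∑ z : V, lap s t wt u z = 0 := by
  classical
  simp only [lap]
  rw [Finset.sum_sub_distrib]
  have h1 : (∑ z : V, if u = z then ∑ e ∈ univ.filter (fun e => s e = u), wt e else 0)
      = ∑ e ∈ univ.filter (fun e => s e = u), wt e := by
    rw [Finset.sum_ite_eq]
    simp
  have h2 : (∑ z : V, ∑ e ∈ univ.filter (fun e => s e = u ∧ t e = z), wt e)
      = ∑ e ∈ univ.filter (fun e => s e = u), wt e := by
    calc (∑ z : V, ∑ e ∈ univ.filter (fun e => s e = u ∧ t e = z), wt e)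
        = ∑ z : V, ∑ e : E, (if s e = u ∧ t e = z then wt e else 0) := by
          refine Finset.sum_congr rfl fun z _ => ?_
          rw [Finset.sum_filter]
      _ = ∑ e : E, ∑ z : V, (if s e = u ∧ t e = z then wt e else 0) := Finset.sum_comm
      _ = ∑ e : E, (if s e = u then wt e else 0) := by
          refine Finset.sum_congr rfl fun e _ => ?_
          by_cases hse : s e = u
          · simp [hse, Finset.sum_ite_eq]
          · simp [hse]
      _ = _ := (Finset.sum_filter _ _).symm
  rw [h1, h2, sub_self]

theorem lap_mulVec_one (s t : E → V) (wt : E → R) :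
    Matrix.mulVec (lap s t wt) (fun _ => (1 : R)) = 0 := by
  funext u
  have := lap_row_sum s t wt u
  simpa [Matrix.mulVec, dotProduct] using this

open Classical in
theorem lap_cover_fiber_sum (s t : E → V) (wt : E → R) (k : ℕ)
    (ν : E → Equiv.Perm (Fin (k + 1))) (u z : V) (y : Fin (k + 1)) :
    (∑ x : Fin (k + 1),
      lap (fun p : E × Fin (k + 1) => (s p.1, p.2))
        (fun p : E × Fin (k + 1) => (t p.1, (ν p.1) p.2))
        (fun p : E × Fin (k + 1) => wt p.1) (u, x) (z, y))
    = lap s t wt u z := by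
  classical
  have hout : ∀ x : Fin (k + 1),
      (∑ p ∈ univ.filter (fun p : E × Fin (k + 1) => (s p.1, p.2) = (u, x)), wt p.1)
      = ∑ e ∈ univ.filter (fun e => s e = u), wt e := by
    intro x
    rw [Finset.sum_filter, Finset.sum_filter, Fintype.sum_prod_type]
    refine Finset.sum_congr rfl fun e _ => ?_
    by_cases hse : s e = u
    · simp [Prod.ext_iff, hse, Finset.sum_ite_eq']
    · simp [Prod.ext_iff, hse]
  have hcw : (∑ x : Fin (k + 1), ∑ p ∈ univ.filter
        (fun p : E × Fin (k + 1) => (s p.1, p.2) = (u, x) ∧ (t p.1, (ν p.1) p.2) = (z, y)), wt p.1)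
      = ∑ e ∈ univ.filter (fun e => s e = u ∧ t e = z), wt e := by
    calc (∑ x : Fin (k + 1), ∑ p ∈ univ.filter
          (fun p : E × Fin (k + 1) => (s p.1, p.2) = (u, x) ∧ (t p.1, (ν p.1) p.2) = (z, y)), wt p.1)
        = ∑ x : Fin (k + 1), ∑ p : E × Fin (k + 1),
            (if (s p.1, p.2) = (u, x) ∧ (t p.1, (ν p.1) p.2) = (z, y) then wt p.1 else 0) := by
          refine Finset.sum_congr rfl fun x _ => ?_
          rw [Finset.sum_filter]
      _ = ∑ p : E × Fin (k + 1), ∑ x : Fin (k + 1),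
            (if (s p.1, p.2) = (u, x) ∧ (t p.1, (ν p.1) p.2) = (z, y) then wt p.1 else 0) :=
          Finset.sum_comm
      _ = ∑ p : E × Fin (k + 1),
            (if s p.1 = u ∧ (t p.1 = z ∧ (ν p.1) p.2 = y) then wt p.1 else 0) := by
          refine Finset.sum_congr rfl fun p _ => ?_
          by_cases hc : s p.1 = u ∧ (t p.1 = z ∧ (ν p.1) p.2 = y)
          · rw [if_pos hc]
            have : ∀ x : Fin (k + 1),
                ((s p.1, p.2) = (u, x) ∧ (t p.1, (ν p.1) p.2) = (z, y)) ↔ x = p.2 := by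
              intro x
              simp [Prod.ext_iff, hc.1, hc.2.1, hc.2.2]
              exact comm
            calc _ = ∑ x : Fin (k+1), (if x = p.2 then wt p.1 else 0) := by
                  refine Finset.sum_congr rfl fun x _ => ?_
                  rw [if_congr (this x) rfl rfl]
              _ = wt p.1 := by rw [Finset.sum_ite_eq']; simp
          · rw [if_neg hc]
            refine Finset.sum_eq_zero fun x _ => ?_
            rw [if_neg]
            intro hcc
            apply hc
            obtain ⟨h1, h2⟩ := hcc
            rw [Prod.ext_iff] at h1 h2
            exact ⟨h1.1, h2.1, h2.2⟩
      _ = ∑ e : E, ∑ x : Fin (k + 1),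
            (if s e = u ∧ (t e = z ∧ (ν e) x = y) then wt e else 0) := by
          exact Fintype.sum_prod_type _
      _ = ∑ e : E, (if s e = u ∧ t e = z then wt e else 0) := by
          refine Finset.sum_congr rfl fun e _ => ?_
          by_cases hc : s e = u ∧ t e = z
          · have : ∀ x : Fin (k + 1),
                (s e = u ∧ (t e = z ∧ (ν e) x = y)) ↔ x = (ν e).symm y := by
              intro x
              simp [hc.1, hc.2, Equiv.apply_eq_iff_eq_symm_apply]
            rw [if_pos hc]
            calc _ = ∑ x : Fin (k+1), (if x = (ν e).symm y then wt e else 0) := by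
                  refine Finset.sum_congr rfl fun x _ => ?_
                  rw [if_congr (this x) rfl rfl]
              _ = wt e := by rw [Finset.sum_ite_eq']; simp
          · refine (if_neg hc) ▸ Finset.sum_eq_zero fun x _ => ?_
            rw [if_neg]
            intro hcc
            exact hc ⟨hcc.1, hcc.2.1⟩
      _ = _ := (Finset.sum_filter _ _).symm
  simp only [lap]
  rw [Finset.sum_sub_distrib, hcw]
  congr 1
  calc (∑ x : Fin (k + 1), if (u, x) = (z, y) then
          ∑ p ∈ univ.filter (fun p : E × Fin (k + 1) => (s p.1, p.2) = (u, x)), wt p.1 else 0)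
      = ∑ x : Fin (k + 1), (if (u, x) = (z, y) then
          ∑ e ∈ univ.filter (fun e => s e = u), wt e else 0) := by
        refine Finset.sum_congr rfl fun x _ => ?_
        rw [if_congr Iff.rfl (hout x) rfl]
    _ = (if u = z then ∑ e ∈ univ.filter (fun e => s e = u), wt e else 0) := by
        by_cases huz : u = z
        · subst huz
          rw [if_pos rfl]
          have : ∀ x : Fin (k+1), ((u, x) = (u, y)) ↔ x = y := by
            intro x; simp [Prod.ext_iff]
          calc _ = ∑ x : Fin (k+1), (if x = y then ∑ e ∈ univ.filter (fun e => s e = u), wt e else 0) := by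
                refine Finset.sum_congr rfl fun x _ => ?_
                rw [if_congr (this x) rfl rfl]
            _ = _ := by rw [Finset.sum_ite_eq']; simp
        · rw [if_neg huz]
          refine Finset.sum_eq_zero fun x _ => ?_
          rw [if_neg]
          intro hcc
          rw [Prod.ext_iff] at hcc
          exact huz hcc.1

end Lap

section FieldPart

variable {K : Type} [Field K]

open Classical in
theorem arb_vecMul_lap (s t : E → V) (wt : E → K) (u₀ : V)
    (h0 : arbSum s t wt u₀ ≠ 0) :
    Matrix.vecMul (fun u => arbSum s t wt u) (lap s t wt) = 0 := by
  classical
  set L := lap s t wt with hL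
  have hdetminor : ∀ u : V,
      ((L.submatrix (Subtype.val : {w : V // w ≠ u} → V) Subtype.val)).det = arbSum s t wt u :=
    fun u => det_lap_minor s t wt u
  have hone : L.mulVec (fun _ => (1 : K)) = 0 := lap_mulVec_one s t wt
  have hdetL : L.det = 0 := by
    rw [← Matrix.exists_mulVec_eq_zero_iff]
    refine ⟨fun _ => 1, ?_, hone⟩
    intro h
    have h1 := congrFun h u₀
    simp at h1
  have hMadj : L * L.adjugate = 0 := by rw [Matrix.mul_adjugate, hdetL, zero_smul]
  have hadjM : L.adjugate * L = 0 := by rw [Matrix.adjugate_mul, hdetL, zero_smul]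
  have hcol : ∀ q p : V, L.adjugate p q = L.adjugate u₀ q := by
    intro q p
    have hd0 : (fun p => L.adjugate p q - L.adjugate u₀ q) = 0 := by
      apply vec_eq_zero_of_mulVec L u₀ (by rw [hdetminor]; exact h0)
      · funext i
        have h2 : (∑ p : V, L i p * L.adjugate p q) = 0 := by
          have h3 := congrFun (congrFun hMadj i) q
          rw [Matrix.mul_apply] at h3
          simpa using h3
        have h4 : (∑ p : V, L i p * L.adjugate u₀ q) = 0 := by
          rw [← Finset.sum_mul, hL, lap_row_sum, zero_mul]
        have h6 : L.mulVec (fun p => L.adjugate p q - L.adjugate u₀ q) i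
            = (∑ p : V, L i p * L.adjugate p q) - ∑ p : V, L i p * L.adjugate u₀ q := by
          simp [Matrix.mulVec, dotProduct, mul_sub, Finset.sum_sub_distrib]
        rw [h6, h2, h4, sub_zero]
        rfl
      · simp
    have h7 := congrFun hd0 p
    exact sub_eq_zero.1 h7
  have hadjrow : ∀ q, L.adjugate u₀ q = arbSum s t wt q := by
    intro q
    rw [← hcol q q, adjugate_diag, hdetminor q]
  funext j
  have h7 := congrFun (congrFun hadjM u₀) j
  rw [Matrix.mul_apply] at h7
  have h8 : Matrix.vecMul (fun u => arbSum s t wt u) L j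
      = ∑ q : V, L.adjugate u₀ q * L q j := by
    simp only [Matrix.vecMul, dotProduct]
    exact Finset.sum_congr rfl fun q _ => by rw [hadjrow q]
  rw [h8, h7]
  rfl

open Classical in
theorem field_main (s t : E → V) (wt : E → K) (k : ℕ)
    (ν : E → Equiv.Perm (Fin (k + 1))) (v w : V) (x y : Fin (k + 1)) :
    arbSum (fun p : E × Fin (k + 1) => (s p.1, p.2))
        (fun p : E × Fin (k + 1) => (t p.1, (ν p.1) p.2))
        (fun p : E × Fin (k + 1) => wt p.1) ((v, x)) * arbSum s t wt w
    = arbSum (fun p : E × Fin (k + 1) => (s p.1, p.2))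
        (fun p : E × Fin (k + 1) => (t p.1, (ν p.1) p.2))
        (fun p : E × Fin (k + 1) => wt p.1) ((w, y)) * arbSum s t wt v := by
  classical
  set s' : E × Fin (k+1) → V × Fin (k+1) := fun p => (s p.1, p.2) with hs'
  set t' : E × Fin (k+1) → V × Fin (k+1) := fun p => (t p.1, (ν p.1) p.2) with ht'
  set wt' : E × Fin (k+1) → K := fun p => wt p.1 with hwt'
  set A : V × Fin (k+1) → K := arbSum s' t' wt' with hA
  set a : V → K := arbSum s t wt with ha
  by_cases hAz : ∀ q, A q = 0
  · rw [hAz (v, x), hAz (w, y), zero_mul, zero_mul]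
  push_neg at hAz
  obtain ⟨r, hr⟩ := hAz
  by_cases hvw : a v = 0 ∧ a w = 0
  · rw [hvw.1, hvw.2, mul_zero, mul_zero]
  have hu₀ : ∃ u₀, a u₀ ≠ 0 := by
    rcases not_and_or.1 hvw with h | h
    exacts [⟨v, h⟩, ⟨w, h⟩]
  obtain ⟨u₀, hu₀⟩ := hu₀
  have hbase : Matrix.vecMul (fun u => a u) (lap s t wt) = 0 := arb_vecMul_lap s t wt u₀ hu₀
  set g : V × Fin (k+1) → K := fun q => a q.1 with hg
  have hgker : Matrix.vecMul g (lap s' t' wt') = 0 := by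
    funext q
    obtain ⟨z, yy⟩ := q
    have h1 : Matrix.vecMul g (lap s' t' wt') (z, yy)
        = ∑ u : V, ∑ xx : Fin (k+1), g (u, xx) * lap s' t' wt' (u, xx) (z, yy) := by
      simp only [Matrix.vecMul, dotProduct]
      exact Fintype.sum_prod_type _
    rw [h1]
    have h2 : ∀ u : V, (∑ xx : Fin (k+1), g (u, xx) * lap s' t' wt' (u, xx) (z, yy))
        = a u * lap s t wt u z := by
      intro u
      have h3 : ∀ xx : Fin (k+1), g (u, xx) = a u := fun _ => rfl
      calc (∑ xx : Fin (k+1), g (u, xx) * lap s' t' wt' (u, xx) (z, yy))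
          = a u * ∑ xx : Fin (k+1), lap s' t' wt' (u, xx) (z, yy) := by
            rw [Finset.mul_sum]
        _ = a u * lap s t wt u z := by
            rw [hs', ht', hwt', lap_cover_fiber_sum s t wt k ν u z yy]
    rw [Finset.sum_congr rfl fun u _ => h2 u]
    have h4 := congrFun hbase z
    simpa [Matrix.vecMul, dotProduct] using h4
  have hAker : Matrix.vecMul (fun q => A q) (lap s' t' wt') = 0 :=
    arb_vecMul_lap s' t' wt' r hr
  have hprop : ∀ q, A r * g q = g r * A q := by
    intro q
    have hd0 : (fun q => A r * g q - g r * A q) = 0 := by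
      apply vec_eq_zero_of_vecMul (lap s' t' wt') r
      · rw [det_lap_minor s' t' wt' r]
        exact hr
      · funext q'
        have hA1 := congrFun hAker q'
        have hg1 := congrFun hgker q'
        simp only [Matrix.vecMul, dotProduct, Pi.zero_apply] at hA1 hg1 ⊢
        calc (∑ p : V × Fin (k+1), (A r * g p - g r * A p) * lap s' t' wt' p q')
            = A r * (∑ p : V × Fin (k+1), g p * lap s' t' wt' p q')
              - g r * ∑ p : V × Fin (k+1), A p * lap s' t' wt' p q' := by
              rw [Finset.mul_sum, Finset.mul_sum, ← Finset.sum_sub_distrib]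
              exact Finset.sum_congr rfl fun p _ => by ring
          _ = 0 := by rw [hA1, hg1, mul_zero, mul_zero, sub_zero]
      · simp [mul_comm]
    have h7 := congrFun hd0 q
    exact sub_eq_zero.1 h7
  have e1 : A r * a w = g r * A (w, y) := hprop (w, y)
  have e2 : A r * a v = g r * A (v, x) := hprop (v, x)
  have h1 : A r * (A (v, x) * a w) = A r * (A (w, y) * a v) := by
    calc A r * (A (v, x) * a w) = A (v, x) * (A r * a w) := by ring
      _ = A (v, x) * (g r * A (w, y)) := by rw [e1]
      _ = A (w, y) * (g r * A (v, x)) := by ring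
      _ = A (w, y) * (A r * a v) := by rw [← e2]
      _ = A r * (A (w, y) * a v) := by ring
  exact mul_left_cancel₀ hr h1

end FieldPart

theorem arbSum_map {S S' : Type} [CommRing S] [CommRing S'] (φ : S →+* S')
    (s t : E → V) (wt : E → S) (v : V) :
    φ (arbSum s t wt v) = arbSum s t (fun e => φ (wt e)) v := by
  classical
  simp only [arbSum]
  rw [map_sum]
  refine Finset.sum_congr rfl fun T _ => ?_
  split_ifs with h
  · rw [map_prod]
  · rw [map_zero]

end ArbAux

/-- (Galashin–Pylyavskyy.)  For a weighted digraph `Γ = (V, E, s, t, wt)`, a voltage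
assignment `ν : E → S_{k+1}` (the fold number `k+1` ranges over all integers ≥ 1), and
the derived (k+1)-fold cover `Γ̃_ν` (vertices `V × Fin (k+1)`, edges `E × Fin (k+1)`,
source `(e,x) ↦ (s e, x)`, target `(e,x) ↦ (t e, ν e x)`, weight `wt e`), the
arborescence ratio is independent of the choice of root and lift: for all vertices
`v, w` and lifts `(v, x)`, `(w, y)`,
`A_{(v,x)}(Γ̃_ν) ⬝ A_w(Γ) = A_{(w,y)}(Γ̃_ν) ⬝ A_v(Γ)`. -/
theorem arborescence_ratio_root_independent
    {V E R : Type} [Fintype V] [DecidableEq V] [Fintype E] [DecidableEq E] [CommRing R]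
    (s t : E → V) (wt : E → R) (k : ℕ) (ν : E → Equiv.Perm (Fin (k + 1)))
    (v w : V) (x y : Fin (k + 1)) :
    arbSum (fun p : E × Fin (k + 1) => (s p.1, p.2))
        (fun p : E × Fin (k + 1) => (t p.1, (ν p.1) p.2))
        (fun p : E × Fin (k + 1) => wt p.1) ((v, x)) * arbSum s t wt w
    = arbSum (fun p : E × Fin (k + 1) => (s p.1, p.2))
        (fun p : E × Fin (k + 1) => (t p.1, (ν p.1) p.2))
        (fun p : E × Fin (k + 1) => wt p.1) ((w, y)) * arbSum s t wt v := by
  classical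
  let R₀ : Type := MvPolynomial E ℤ
  let K : Type := FractionRing R₀
  let wtK : E → K := fun e => algebraMap R₀ K (MvPolynomial.X e)
  let ι : R₀ →+* K := algebraMap R₀ K
  have hι : Function.Injective ι := IsFractionRing.injective R₀ K
  have hfield := ArbAux.field_main s t wtK k ν v w x y
  have hpoly : arbSum (fun p : E × Fin (k + 1) => (s p.1, p.2))
        (fun p : E × Fin (k + 1) => (t p.1, (ν p.1) p.2))
        (fun p : E × Fin (k + 1) => MvPolynomial.X p.1 : E × Fin (k+1) → R₀) ((v, x))
          * arbSum s t (fun e => MvPolynomial.X e) w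
      = arbSum (fun p : E × Fin (k + 1) => (s p.1, p.2))
        (fun p : E × Fin (k + 1) => (t p.1, (ν p.1) p.2))
        (fun p : E × Fin (k + 1) => MvPolynomial.X p.1) ((w, y))
          * arbSum s t (fun e => MvPolynomial.X e) v := by
    apply hι
    rw [map_mul, map_mul, ArbAux.arbSum_map ι, ArbAux.arbSum_map ι,
      ArbAux.arbSum_map ι, ArbAux.arbSum_map ι]
    exact hfield
  let φ : R₀ →+* R := MvPolynomial.eval₂Hom (Int.castRingHom R) wt
  have hspec := congrArg φ hpoly
  rw [map_mul, map_mul, ArbAux.arbSum_map φ, ArbAux.arbSum_map φ,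
    ArbAux.arbSum_map φ, ArbAux.arbSum_map φ] at hspec
  have hw1 : (fun e => φ (MvPolynomial.X e)) = wt := by
    funext e; exact MvPolynomial.eval₂Hom_X' _ _ _
  have hw2 : (fun p : E × Fin (k+1) => φ ((fun p : E × Fin (k + 1) => (MvPolynomial.X p.1 : R₀)) p))
      = fun p : E × Fin (k+1) => wt p.1 := by
    funext p; exact MvPolynomial.eval₂Hom_X' _ _ _
  rw [hw1, hw2] at hspec
  exact hspec
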